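/- Let N ≥ 1 and let (a_1, …, a_N) ∈ ℝ^N and A, C > 0 satisfy: (1) Σ_{i=1}^N a_i = 0; (2) Σ_{i=1}^N a_i² ≤ C; (3) |a_i| ≤ A for each 1 ≤ i ≤ N. If Z_1, …, Z_N, W_1, …, W_N are 2N independent standard real Gaussian random variables, then for every t > 0 one has P(|Σ_{i=1}^N a_i·(Z_i² + W_i²)| ≥ t) ≤ 2·(A·t/(2C) + 1)^{C/A²}·exp(−t/(2A)). -/

import Mathlib

open MeasureTheory ProbabilityTheory Real ENNReal


lemma shift_log_sum {x : ℝ} (hx1 : |x| < 1) :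
    HasSum (fun n : ℕ => x ^ (n + 2) / (n + 2)) (-Real.log (1 - x) - x) := by
  have hsx := Real.hasSum_pow_div_log_of_abs_lt_one hx1
  have := (hasSum_nat_add_iff' (f := fun n : ℕ => x ^ (n + 1) / (n + 1)) 1).mpr hsx
  simp only [Finset.range_one, Finset.sum_singleton, Nat.cast_zero, pow_one] at this
  convert this using 2 with n
  · rfl
  · push_cast; ring_nf
  · norm_num

lemma key_ineq {u x : ℝ} (hu0 : 0 < u) (hu1 : u < 1) (hx : |x| ≤ u) :
    -Real.log (1 - x) - x ≤ x ^ 2 / u ^ 2 * (-Real.log (1 - u) - u) := by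
  have hx1 : |x| < 1 := lt_of_le_of_lt hx hu1
  have hu1' : |u| < 1 := by rwa [abs_of_pos hu0]
  have hsx' := shift_log_sum hx1
  have hsu' := (shift_log_sum hu1').mul_left (x ^ 2 / u ^ 2)
  refine hasSum_le (fun n => ?_) hsx' hsu'
  have hn : (0 : ℝ) < (n : ℝ) + 2 := by positivity
  have h1 : x ^ (n + 2) ≤ x ^ 2 * u ^ n := by
    calc x ^ (n + 2) ≤ |x ^ (n + 2)| := le_abs_self _
      _ = |x| ^ 2 * |x| ^ n := by rw [abs_pow]; ring
      _ ≤ |x| ^ 2 * u ^ n := by gcongr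
      _ = x ^ 2 * u ^ n := by rw [sq_abs]
  have h2 : x ^ 2 / u ^ 2 * (u ^ (n + 2) / ((n : ℝ) + 2)) = x ^ 2 * u ^ n / ((n : ℝ) + 2) := by
    field_simp
    ring
  calc x ^ (n + 2) / ((n : ℝ) + 2) ≤ x ^ 2 * u ^ n / ((n : ℝ) + 2) := by gcongr
    _ = x ^ 2 / u ^ 2 * (u ^ (n + 2) / ((n : ℝ) + 2)) := h2.symm


lemma gaussianReal_std : gaussianReal 0 1 =
    volume.withDensity (fun x => ENNReal.ofReal (gaussianPDFReal 0 1 x)) := by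
  rw [gaussianReal_of_var_ne_zero _ one_ne_zero]
  rfl

lemma integral_gaussian_fun (f : ℝ → ℝ) :
    ∫ x, f x ∂(gaussianReal 0 1) = ∫ x, gaussianPDFReal 0 1 x * f x := by
  rw [gaussianReal_std]
  have hmeas : Measurable (fun x => (gaussianPDFReal 0 1 x).toNNReal) :=
    (measurable_gaussianPDFReal 0 1).real_toNNReal
  have : (fun x => ENNReal.ofReal (gaussianPDFReal 0 1 x))
      = (fun x => ((gaussianPDFReal 0 1 x).toNNReal : ℝ≥0∞)) := rfl
  rw [this, integral_withDensity_eq_integral_smul hmeas]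
  congr 1 with x
  simp [NNReal.smul_def, Real.coe_toNNReal _ (gaussianPDFReal_nonneg 0 1 x)]

lemma integrable_gaussian_fun_iff {f : ℝ → ℝ} (hf : Measurable f) :
    Integrable f (gaussianReal 0 1) ↔ Integrable (fun x => gaussianPDFReal 0 1 x * f x) := by
  rw [gaussianReal_std]
  have hmeas : Measurable (fun x => (gaussianPDFReal 0 1 x).toNNReal) :=
    (measurable_gaussianPDFReal 0 1).real_toNNReal
  have h2 : (fun x => ENNReal.ofReal (gaussianPDFReal 0 1 x))
      = (fun x => ((gaussianPDFReal 0 1 x).toNNReal : ℝ≥0∞)) := rfl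
  rw [h2, integrable_withDensity_iff_integrable_smul hmeas]
  constructor <;> intro h <;> [skip; skip] <;>
  · refine h.congr (Filter.Eventually.of_forall fun x => ?_)
    simp [NNReal.smul_def, Real.coe_toNNReal _ (gaussianPDFReal_nonneg 0 1 x)]

lemma integrable_exp_sq_gaussian {s : ℝ} (hs : s < 1/2) :
    Integrable (fun x => Real.exp (s * x ^ 2)) (gaussianReal 0 1) := by
  rw [integrable_gaussian_fun_iff (by measurability)]
  have hb : 0 < 1/2 - s := by linarith
  have key : ∀ x : ℝ, gaussianPDFReal 0 1 x * Real.exp (s * x ^ 2)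
      = (Real.sqrt (2 * π))⁻¹ * Real.exp (-(1/2 - s) * x ^ 2) := by
    intro x
    simp only [gaussianPDFReal, NNReal.coe_one, mul_one, sub_zero]
    rw [mul_assoc, ← Real.exp_add]
    congr 2
    ring
  simp only [key]
  exact (integrable_exp_neg_mul_sq hb).const_mul _

lemma integral_exp_sq_gaussian {s : ℝ} (hs : s < 1/2) :
    ∫ x, Real.exp (s * x ^ 2) ∂(gaussianReal 0 1) = (Real.sqrt (1 - 2 * s))⁻¹ := by
  rw [integral_gaussian_fun]
  have hb : 0 < 1/2 - s := by linarith
  have key : ∀ x : ℝ, gaussianPDFReal 0 1 x * Real.exp (s * x ^ 2)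
      = (Real.sqrt (2 * π))⁻¹ * Real.exp (-(1/2 - s) * x ^ 2) := by
    intro x
    simp only [gaussianPDFReal, NNReal.coe_one, mul_one, sub_zero]
    rw [mul_assoc, ← Real.exp_add]
    congr 2
    ring
  simp only [key]
  rw [integral_const_mul, integral_gaussian]
  have hπ := Real.pi_pos
  rw [← Real.sqrt_inv, ← Real.sqrt_inv, ← Real.sqrt_mul (by positivity)]
  congr 1
  have h1 : (1:ℝ)/2 - s ≠ 0 := by linarith
  have h2 : (1:ℝ) - 2*s ≠ 0 := by linarith
  have h3 : π ≠ 0 := ne_of_gt hπ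
  field_simp

lemma one_sided {Ω : Type} [MeasurableSpace Ω]
    (μ : Measure Ω) [IsProbabilityMeasure μ]
    (N : ℕ)
    (a : Fin N → ℝ) (A C : ℝ) (hA : 0 < A) (hC : 0 < C)
    (ha1 : ∑ i, a i = 0)
    (ha2 : ∑ i, a i ^ 2 ≤ C)
    (ha3 : ∀ i, |a i| ≤ A)
    (Z W : Fin N → Ω → ℝ)
    (hmeasZ : ∀ i, Measurable (Z i)) (hmeasW : ∀ i, Measurable (W i))
    (hindep : iIndepFun (Sum.elim Z W) μ)
    (hgaussZ : ∀ i, Measure.map (Z i) μ = gaussianReal 0 1)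
    (hgaussW : ∀ i, Measure.map (W i) μ = gaussianReal 0 1)
    (t : ℝ) (ht : 0 < t) :
    (μ {ω | t ≤ ∑ i, a i * (Z i ω ^ 2 + W i ω ^ 2)}).toReal ≤
      (A * t / (2 * C) + 1) ^ (C / A ^ 2) * Real.exp (-(t / (2 * A))) := by
  -- parameters
  set r : ℝ := A * t / (2 * C) with hr_def
  have hr : 0 < r := by positivity
  set u : ℝ := r / (1 + r) with hu_def
  have h1r : (0:ℝ) < 1 + r := by linarith
  have hu0 : 0 < u := by positivity
  have hu1 : u < 1 := by
    rw [hu_def, div_lt_one h1r]; linarith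
  have h1u : 1 - u = (1 + r)⁻¹ := by
    rw [hu_def]; field_simp; ring
  set l : ℝ := u / (2 * A) with hl_def
  have hl : 0 < l := by positivity
  have hlA : 2 * l * A = u := by
    rw [hl_def]; field_simp
  -- random variables
  set b : Fin N ⊕ Fin N → ℝ := Sum.elim a a with hb_def
  set V : Fin N ⊕ Fin N → Ω → ℝ := Sum.elim Z W with hV_def
  have hmeasV : ∀ j, Measurable (V j) := by
    rintro (i | i)
    exacts [hmeasZ i, hmeasW i]
  have hgaussV : ∀ j, Measure.map (V j) μ = gaussianReal 0 1 := by
    rintro (i | i)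
    exacts [hgaussZ i, hgaussW i]
  have hbA : ∀ j, |b j| ≤ A := by rintro (i | i) <;> exact ha3 i
  set X : Fin N ⊕ Fin N → Ω → ℝ := fun j ω => b j * V j ω ^ 2 with hX_def
  have hmeasX : ∀ j, Measurable (X j) := fun j =>
    ((hmeasV j).pow_const 2).const_mul _
  have hindepX : iIndepFun X μ := by
    have := hindep.comp (fun j (x : ℝ) => b j * x ^ 2)
      (fun j => (measurable_id.pow_const 2).const_mul _)
    exact this
  -- bounds on l * b j
  have hlb : ∀ j, l * b j < 1 / 2 := by
    intro j
    have h1 : l * b j ≤ l * |b j| := by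
      have := le_abs_self (b j)
      nlinarith
    have h2 : l * |b j| ≤ l * A := by nlinarith [hbA j]
    have h3 : 2 * l * A = u := hlA
    nlinarith
  have hvpos : ∀ j, 0 < 1 - 2 * (l * b j) := by
    intro j
    have h1 : 2 * (l * b j) ≤ 2 * (l * |b j|) := by
      have := le_abs_self (b j)
      nlinarith
    have h2 : 2 * (l * |b j|) ≤ 2 * l * A := by nlinarith [hbA j]
    nlinarith
  -- mgf of each X j
  have hmgf : ∀ j, mgf (X j) μ l = (Real.sqrt (1 - 2 * (l * b j)))⁻¹ := by
    intro j
    have hmap : mgf (X j) μ l = ∫ x, Real.exp ((l * b j) * x ^ 2) ∂(Measure.map (V j) μ) := by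
      rw [integral_map (hmeasV j).aemeasurable
        ((by fun_prop : Measurable (fun x : ℝ => Real.exp (l * b j * x ^ 2))).aestronglyMeasurable)]
      simp only [mgf, hX_def]
      congr 1 with ω
      ring_nf
    rw [hmap, hgaussV j, integral_exp_sq_gaussian (hlb j)]
  -- integrability
  have hint : ∀ j, Integrable (fun ω => Real.exp (l * X j ω)) μ := by
    intro j
    have h0 : Integrable (fun x => Real.exp ((l * b j) * x ^ 2)) (Measure.map (V j) μ) := by
      rw [hgaussV j]; exact integrable_exp_sq_gaussian (hlb j)
    have h1 := (integrable_map_measure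
      ((by fun_prop : Measurable (fun x : ℝ => Real.exp (l * b j * x ^ 2))).aestronglyMeasurable)
      (hmeasV j).aemeasurable).mp h0
    refine h1.congr (Filter.Eventually.of_forall fun ω => ?_)
    simp only [Function.comp_apply, hX_def]
    ring_nf
  have hintS : Integrable (fun ω => Real.exp (l * (∑ j, X j) ω)) μ :=
    hindepX.integrable_exp_mul_sum hmeasX (fun j _ => hint j)
  -- Chernoff
  have hcher := measure_ge_le_exp_mul_mgf (X := ∑ j, X j) (μ := μ) t hl.le hintS
  have hset : {ω | t ≤ (∑ j, X j) ω} = {ω | t ≤ ∑ i, a i * (Z i ω ^ 2 + W i ω ^ 2)} := by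
    ext ω
    simp only [Set.mem_setOf_eq, Finset.sum_apply, hX_def, hb_def, hV_def,
      Fintype.sum_sum_type, Sum.elim_inl, Sum.elim_inr, ← Finset.sum_add_distrib, mul_add]
  rw [hset] at hcher
  -- product of mgfs
  have hprod : mgf (∑ j, X j) μ l = ∏ i, (1 - 2 * (l * a i))⁻¹ := by
    rw [hindepX.mgf_sum hmeasX]
    simp only [hmgf]
    rw [Fintype.prod_sum_type]
    simp only [hb_def, Sum.elim_inl, Sum.elim_inr]
    rw [← Finset.prod_mul_distrib]
    refine Finset.prod_congr rfl fun i _ => ?_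
    have hvi : (0:ℝ) < 1 - 2 * (l * a i) := hvpos (Sum.inl i)
    rw [← mul_inv, Real.mul_self_sqrt hvi.le]
  -- rewrite product as exp of sum of logs
  have hexp : ∏ i, (1 - 2 * (l * a i))⁻¹ = Real.exp (∑ i, -Real.log (1 - 2 * (l * a i))) := by
    rw [Real.exp_sum]
    refine Finset.prod_congr rfl fun i _ => ?_
    have hvi : (0:ℝ) < 1 - 2 * (l * a i) := hvpos (Sum.inl i)
    rw [Real.exp_neg, Real.exp_log hvi]
  -- bound the sum of logs
  set G : ℝ := -Real.log (1 - u) - u with hG_def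
  have hG0 : 0 ≤ G := by
    have := Real.log_le_sub_one_of_pos (by linarith : (0:ℝ) < 1 - u)
    rw [hG_def]; linarith
  have hEbound : (∑ i, -Real.log (1 - 2 * (l * a i))) ≤ C / A ^ 2 * G := by
    have hxu : ∀ i : Fin N, |2 * l * a i| ≤ u := by
      intro i
      rw [abs_mul, abs_of_pos (by positivity : (0:ℝ) < 2 * l)]
      calc 2 * l * |a i| ≤ 2 * l * A := by nlinarith [ha3 i]
        _ = u := hlA
    have hterm : ∀ i : Fin N, -Real.log (1 - 2 * l * a i) - 2 * l * a i ≤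
        (2 * l * a i) ^ 2 / u ^ 2 * G := fun i => key_ineq hu0 hu1 (hxu i)
    have hsum0 : ∑ i, 2 * l * a i = 0 := by
      rw [← Finset.mul_sum, ha1, mul_zero]
    have step1 : ∑ i, -Real.log (1 - 2 * (l * a i))
        = ∑ i, (-Real.log (1 - 2 * l * a i) - 2 * l * a i) := by
      rw [Finset.sum_sub_distrib, hsum0, sub_zero]
      refine Finset.sum_congr rfl fun i _ => ?_
      ring_nf
    have step2 : ∑ i, (-Real.log (1 - 2 * l * a i) - 2 * l * a i)
        ≤ ∑ i, (2 * l * a i) ^ 2 / u ^ 2 * G :=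
      Finset.sum_le_sum fun i _ => hterm i
    have step3 : ∑ i, (2 * l * a i) ^ 2 / u ^ 2 * G = (G / u ^ 2 * (4 * l ^ 2)) * ∑ i, a i ^ 2 := by
      rw [Finset.mul_sum]
      refine Finset.sum_congr rfl fun i _ => ?_
      ring
    have step4 : (G / u ^ 2 * (4 * l ^ 2)) * ∑ i, a i ^ 2 ≤ (G / u ^ 2 * (4 * l ^ 2)) * C := by
      have hc : 0 ≤ G / u ^ 2 * (4 * l ^ 2) := by positivity
      exact mul_le_mul_of_nonneg_left ha2 hc
    have step5 : (G / u ^ 2 * (4 * l ^ 2)) * C = C / A ^ 2 * G := by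
      have hu2 : u ^ 2 = 4 * l ^ 2 * A ^ 2 := by rw [← hlA]; ring
      rw [hu2]
      field_simp
    calc ∑ i, -Real.log (1 - 2 * (l * a i))
        = ∑ i, (-Real.log (1 - 2 * l * a i) - 2 * l * a i) := step1
      _ ≤ ∑ i, (2 * l * a i) ^ 2 / u ^ 2 * G := step2
      _ = (G / u ^ 2 * (4 * l ^ 2)) * ∑ i, a i ^ 2 := step3
      _ ≤ (G / u ^ 2 * (4 * l ^ 2)) * C := step4
      _ = C / A ^ 2 * G := step5
  -- final computation
  have hfinal : Real.exp (-l * t + C / A ^ 2 * G)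
      = (A * t / (2 * C) + 1) ^ (C / A ^ 2) * Real.exp (-(t / (2 * A))) := by
    have hbase : A * t / (2 * C) + 1 = 1 + r := by rw [hr_def]; ring
    have hlog1u : Real.log (1 - u) = -Real.log (1 + r) := by
      rw [h1u, Real.log_inv]
    rw [hbase, Real.rpow_def_of_pos h1r, ← Real.exp_add]
    congr 1
    rw [hG_def, hlog1u]
    have hAne : A ≠ 0 := ne_of_gt hA
    have hCne : C ≠ 0 := ne_of_gt hC
    have h1rne : 1 + r ≠ 0 := ne_of_gt h1r
    rw [hl_def, hu_def, hr_def]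
    field_simp
    ring
  calc (μ {ω | t ≤ ∑ i, a i * (Z i ω ^ 2 + W i ω ^ 2)}).toReal
      ≤ Real.exp (-l * t) * mgf (∑ j, X j) μ l := hcher
    _ = Real.exp (-l * t) * Real.exp (∑ i, -Real.log (1 - 2 * (l * a i))) := by
        rw [hprod, hexp]
    _ ≤ Real.exp (-l * t) * Real.exp (C / A ^ 2 * G) := by
        exact mul_le_mul_of_nonneg_left (Real.exp_le_exp.mpr hEbound) (Real.exp_nonneg _)
    _ = Real.exp (-l * t + C / A ^ 2 * G) := by rw [← Real.exp_add]
    _ = (A * t / (2 * C) + 1) ^ (C / A ^ 2) * Real.exp (-(t / (2 * A))) := hfinal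

/-- Large deviations estimate for weighted sums of independent `χ²₂` random variables
(sums of two squares of standard Gaussians), with zero-sum weights. -/
theorem stmt_9 {Ω : Type} [MeasurableSpace Ω]
    (μ : Measure Ω) [IsProbabilityMeasure μ]
    (N : ℕ) (hN : 1 ≤ N)
    (a : Fin N → ℝ) (A C : ℝ) (hA : 0 < A) (hC : 0 < C)
    (ha1 : ∑ i, a i = 0)
    (ha2 : ∑ i, a i ^ 2 ≤ C)
    (ha3 : ∀ i, |a i| ≤ A)
    (Z W : Fin N → Ω → ℝ)
    (hmeasZ : ∀ i, Measurable (Z i)) (hmeasW : ∀ i, Measurable (W i))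
    (hindep : iIndepFun (Sum.elim Z W) μ)
    (hgaussZ : ∀ i, Measure.map (Z i) μ = gaussianReal 0 1)
    (hgaussW : ∀ i, Measure.map (W i) μ = gaussianReal 0 1)
    (t : ℝ) (ht : 0 < t) :
    μ {ω | t ≤ |∑ i, a i * (Z i ω ^ 2 + W i ω ^ 2)|} ≤
      ENNReal.ofReal (2 * (A * t / (2 * C) + 1) ^ (C / A ^ 2) * Real.exp (-(t / (2 * A)))) := by
  set half : ℝ := (A * t / (2 * C) + 1) ^ (C / A ^ 2) * Real.exp (-(t / (2 * A))) with hhalf_def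
  have hhalf0 : 0 ≤ half := by
    apply mul_nonneg _ (Real.exp_nonneg _)
    apply Real.rpow_nonneg
    positivity
  have h1 := one_sided μ N a A C hA hC ha1 ha2 ha3 Z W hmeasZ hmeasW hindep hgaussZ hgaussW t ht
  have h2 := one_sided μ N (fun i => -a i) A C hA hC
    (by rw [Finset.sum_neg_distrib, ha1, neg_zero])
    (by simp only [neg_sq]; exact ha2)
    (fun i => by rw [abs_neg]; exact ha3 i)
    Z W hmeasZ hmeasW hindep hgaussZ hgaussW t ht
  have hset2 : {ω | t ≤ ∑ i, (fun i => -a i) i * (Z i ω ^ 2 + W i ω ^ 2)}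
      = {ω | t ≤ -∑ i, a i * (Z i ω ^ 2 + W i ω ^ 2)} := by
    ext ω
    simp [neg_mul, Finset.sum_neg_distrib]
  rw [hset2] at h2
  have hsub : {ω | t ≤ |∑ i, a i * (Z i ω ^ 2 + W i ω ^ 2)|} ⊆
      {ω | t ≤ ∑ i, a i * (Z i ω ^ 2 + W i ω ^ 2)} ∪
      {ω | t ≤ -∑ i, a i * (Z i ω ^ 2 + W i ω ^ 2)} := by
    intro ω hω
    rcases le_abs.mp (show t ≤ |∑ i, a i * (Z i ω ^ 2 + W i ω ^ 2)| from hω) with h | h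
    · exact Or.inl h
    · exact Or.inr h
  have hb1 : μ {ω | t ≤ ∑ i, a i * (Z i ω ^ 2 + W i ω ^ 2)} ≤ ENNReal.ofReal half := by
    rw [← ENNReal.ofReal_toReal (measure_ne_top μ _)]
    exact ENNReal.ofReal_le_ofReal h1
  have hb2 : μ {ω | t ≤ -∑ i, a i * (Z i ω ^ 2 + W i ω ^ 2)} ≤ ENNReal.ofReal half := by
    rw [← ENNReal.ofReal_toReal (measure_ne_top μ _)]
    exact ENNReal.ofReal_le_ofReal h2
  calc μ {ω | t ≤ |∑ i, a i * (Z i ω ^ 2 + W i ω ^ 2)|}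
      ≤ μ ({ω | t ≤ ∑ i, a i * (Z i ω ^ 2 + W i ω ^ 2)} ∪
          {ω | t ≤ -∑ i, a i * (Z i ω ^ 2 + W i ω ^ 2)}) := measure_mono hsub
    _ ≤ μ {ω | t ≤ ∑ i, a i * (Z i ω ^ 2 + W i ω ^ 2)} +
        μ {ω | t ≤ -∑ i, a i * (Z i ω ^ 2 + W i ω ^ 2)} := measure_union_le _ _
    _ ≤ ENNReal.ofReal half + ENNReal.ofReal half := add_le_add hb1 hb2
    _ = ENNReal.ofReal (half + half) := (ENNReal.ofReal_add hhalf0 hhalf0).symm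
    _ = ENNReal.ofReal (2 * (A * t / (2 * C) + 1) ^ (C / A ^ 2) * Real.exp (-(t / (2 * A)))) := by
        rw [hhalf_def]
        congr 1
        ring
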